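/- Let x ≥ 1, y ≥ 0 be reals and a, b, m, s positive integers. Then the formal power series Σ_{k≥0} (−yq^s/x; q^m)_k x^k q^{a(k+1)} / (q^s; q^m)_{k+1} − Σ_{k≥0} (−yq^s/x; q^m)_k x^k q^{ab(k+1)} / (q^s; q^m)_{k+1} has non-negative coefficients, where (t; q^m)_k = ∏_{0≤j<k}(1 − t q^{mj}). (When x = 0 the factor (−yq^s/x;q^m)_k x^k is interpreted as ∏_{0≤j<k}(x + y q^{s+mj}) with x = 0.) -/

import Mathlib

open PowerSeries


namespace QDiffAux

def Nonneg (f : PowerSeries ℝ) : Prop := ∀ n, 0 ≤ coeff (R := ℝ) n f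

lemma nonneg_add {f g : PowerSeries ℝ} (hf : Nonneg f) (hg : Nonneg g) : Nonneg (f + g) :=
  fun n => by rw [map_add]; exact add_nonneg (hf n) (hg n)

lemma nonneg_mul {f g : PowerSeries ℝ} (hf : Nonneg f) (hg : Nonneg g) : Nonneg (f * g) := by
  intro n
  rw [coeff_mul]
  exact Finset.sum_nonneg fun p _ => mul_nonneg (hf p.1) (hg p.2)

lemma nonneg_one : Nonneg (1 : PowerSeries ℝ) := by
  intro n; rw [coeff_one]; split <;> norm_num

lemma nonneg_X_pow (e : ℕ) : Nonneg ((X : PowerSeries ℝ) ^ e) := by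
  intro n; rw [coeff_X_pow]; split <;> norm_num

lemma inv_one_sub_eq {g : PowerSeries ℝ} (h0 : constantCoeff (R := ℝ) g = 0) :
    (1 - g)⁻¹ = 1 + g * (1 - g)⁻¹ := by
  have hc : constantCoeff (R := ℝ) (1 - g) ≠ 0 := by
    rw [map_sub, map_one, h0, sub_zero]; norm_num
  have h1 : (1 - g) * (1 - g)⁻¹ = 1 := PowerSeries.mul_inv_cancel _ hc
  linear_combination h1

lemma nonneg_inv_one_sub {g : PowerSeries ℝ} (h0 : constantCoeff (R := ℝ) g = 0) (hg : Nonneg g) :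
    Nonneg (1 - g)⁻¹ := by
  intro n
  induction n using Nat.strong_induction_on with
  | _ n ih =>
    rw [inv_one_sub_eq h0, map_add, coeff_mul]
    refine add_nonneg (nonneg_one n) (Finset.sum_nonneg ?_)
    rintro ⟨i, j⟩ hij
    rw [Finset.HasAntidiagonal.mem_antidiagonal] at hij
    rcases Nat.eq_zero_or_pos i with hi | hi
    · subst hi
      rw [coeff_zero_eq_constantCoeff, h0, zero_mul]
    · have hj : j < n := by omega
      exact mul_nonneg (hg i) (ih j hj)

end QDiffAux

namespace QDiffAux

lemma nonneg_of_ge1 {f : PowerSeries ℝ} (hf : Nonneg (f - 1)) : Nonneg f := by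
  have : f = (f - 1) + 1 := by ring
  rw [this]; exact nonneg_add hf nonneg_one

lemma ge1_mul {f g : PowerSeries ℝ} (hf : Nonneg (f - 1)) (hg : Nonneg (g - 1)) :
    Nonneg (f * g - 1) := by
  have : f * g - 1 = (f - 1) * g + (g - 1) := by ring
  rw [this]
  exact nonneg_add (nonneg_mul hf (nonneg_of_ge1 hg)) hg

lemma ge1_prod {ι : Type*} (s : Finset ι) (f : ι → PowerSeries ℝ)
    (h : ∀ i ∈ s, Nonneg (f i - 1)) : Nonneg (∏ i ∈ s, f i - 1) := by
  induction s using Finset.cons_induction with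
  | empty =>
    intro n; simp
  | cons i s his ih =>
    rw [Finset.prod_cons]
    exact ge1_mul (h i (Finset.mem_cons_self i s))
      (ih fun j hj => h j (Finset.mem_cons_of_mem hj))

lemma ge1_inv_one_sub_X_pow {e : ℕ} (he : 1 ≤ e) :
    Nonneg ((1 - (X : PowerSeries ℝ) ^ e)⁻¹ - 1) := by
  have h0 : constantCoeff (R := ℝ) ((X : PowerSeries ℝ) ^ e) = 0 := by
    rw [map_pow, constantCoeff_X, zero_pow (by omega)]
  have key := inv_one_sub_eq h0
  have : (1 - (X : PowerSeries ℝ) ^ e)⁻¹ - 1 = X ^ e * (1 - (X : PowerSeries ℝ) ^ e)⁻¹ := by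
    nth_rewrite 1 [key]; ring
  rw [this]
  exact nonneg_mul (nonneg_X_pow e) (nonneg_inv_one_sub h0 (nonneg_X_pow e))

lemma ge1_factor {x y : ℝ} (hx : 1 ≤ x) (hy : 0 ≤ y) (e : ℕ) :
    Nonneg (C (R := ℝ) x + C (R := ℝ) y * (X : PowerSeries ℝ) ^ e - 1) := by
  intro n
  rw [map_sub, map_add, coeff_one, coeff_C_mul, coeff_C, coeff_X_pow]
  split_ifs <;> nlinarith

/-- inverse of a finite product of `1 - X^e` factors equals product of inverses -/
lemma prod_inv (n : ℕ) (e : ℕ → ℕ) :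
    (∏ j ∈ Finset.range n, (1 - (X : PowerSeries ℝ) ^ e j))⁻¹ =
      ∏ j ∈ Finset.range n, (1 - (X : PowerSeries ℝ) ^ e j)⁻¹ := by
  induction n with
  | zero => simp
  | succ n ih =>
    rw [Finset.prod_range_succ, Finset.prod_range_succ, PowerSeries.mul_inv_rev, ih, mul_comm]

lemma ge1_prod_inv {n : ℕ} {e : ℕ → ℕ} (he : ∀ j, 1 ≤ e j) :
    Nonneg ((∏ j ∈ Finset.range n, (1 - (X : PowerSeries ℝ) ^ e j))⁻¹ - 1) := by
  rw [prod_inv]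
  exact ge1_prod _ _ fun j _ => ge1_inv_one_sub_X_pow (he j)

lemma coeff_eq_zero_of_X_pow_mul {h : PowerSeries ℝ} {M n : ℕ} (hn : n < M) :
    coeff (R := ℝ) n ((X : PowerSeries ℝ) ^ M * h) = 0 := by
  rw [coeff_mul]
  refine Finset.sum_eq_zero fun p hp => ?_
  rw [Finset.HasAntidiagonal.mem_antidiagonal] at hp
  rw [coeff_X_pow, if_neg (by omega), zero_mul]

end QDiffAux

namespace QDiffAux

/-- the `k`-th term of the series with staircase parameter `c` -/
noncomputable def T (x y : ℝ) (c m s : ℕ) (k : ℕ) : PowerSeries ℝ :=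
  (∏ j ∈ Finset.range k, (C (R := ℝ) x + C (R := ℝ) y * X ^ (s + m * j))) * X ^ (c * (k + 1)) *
    (∏ j ∈ Finset.range (k + 1), (1 - (X : PowerSeries ℝ) ^ (s + m * j)))⁻¹

lemma nonneg_T (x y : ℝ) (hx : 1 ≤ x) (hy : 0 ≤ y) (c m s : ℕ) (hs : 1 ≤ s) (k : ℕ) :
    Nonneg (T x y c m s k) := by
  refine nonneg_mul (nonneg_mul ?_ (nonneg_X_pow _)) ?_
  · exact nonneg_of_ge1 (ge1_prod _ _ fun j _ => ge1_factor hx hy _)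
  · exact nonneg_of_ge1 (ge1_prod_inv fun j => by omega)

lemma coeff_T_zero (x y : ℝ) (c m s k n : ℕ) (h : n < c * (k + 1)) :
    coeff (R := ℝ) n (T x y c m s k) = 0 := by
  have heq : T x y c m s k = X ^ (c * (k + 1)) *
      ((∏ j ∈ Finset.range k, (C (R := ℝ) x + C (R := ℝ) y * X ^ (s + m * j))) *
        (∏ j ∈ Finset.range (k + 1), (1 - (X : PowerSeries ℝ) ^ (s + m * j)))⁻¹) := by
    unfold T; ring
  rw [heq]
  exact coeff_eq_zero_of_X_pow_mul h

lemma dominate (x y : ℝ) (hx : 1 ≤ x) (hy : 0 ≤ y) (m s : ℕ) (hs : 1 ≤ s)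
    (a b' k n : ℕ) :
    coeff (R := ℝ) n (T x y (a * (b' + 1)) m s k) ≤ coeff (R := ℝ) n (T x y a m s (k + b' * (k + 1))) := by
  set d := b' * (k + 1) with hd
  set R : PowerSeries ℝ :=
      (∏ i ∈ Finset.range d, (C (R := ℝ) x + C (R := ℝ) y * X ^ (s + m * (k + i)))) *
        (∏ i ∈ Finset.range d, (1 - (X : PowerSeries ℝ) ^ (s + m * (k + 1 + i))))⁻¹ with hR
  have heq : T x y a m s (k + d) = T x y (a * (b' + 1)) m s k * R := by
    unfold T
    rw [Finset.prod_range_add]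
    rw [show k + d + 1 = (k + 1) + d by omega]
    rw [Finset.prod_range_add, PowerSeries.mul_inv_rev]
    rw [show a * ((k + 1) + d) = a * (b' + 1) * (k + 1) by rw [hd]; ring]
    rw [hR]
    ring
  have h1 : Nonneg (T x y (a * (b' + 1)) m s k) := nonneg_T x y hx hy _ m s hs k
  have h2 : Nonneg (R - 1) := by
    rw [hR]
    refine ge1_mul (ge1_prod _ _ fun i _ => ge1_factor hx hy _) (ge1_prod_inv fun i => by omega)
  have h3 := nonneg_mul h1 h2 n
  have key : coeff (R := ℝ) n (T x y a m s (k + d)) - coeff (R := ℝ) n (T x y (a * (b' + 1)) m s k)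
      = coeff (R := ℝ) n (T x y (a * (b' + 1)) m s k * (R - 1)) := by
    rw [← map_sub]
    congr 1
    rw [heq]; ring
  linarith

end QDiffAux


open QDiffAux in
/-- Let `x ≥ 1`, `y ≥ 0` and `a, b, m, s ≥ 1`. Then the formal power series
`Σ_{k≥0} (−yq^s/x; q^m)_k x^k q^{a(k+1)}/(q^s; q^m)_{k+1}
  − Σ_{k≥0} (−yq^s/x; q^m)_k x^k q^{ab(k+1)}/(q^s; q^m)_{k+1}`
has non-negative coefficients, where `(t; q^m)_k = ∏_{0≤j<k}(1 − t q^{mj})` and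
`(−yq^s/x; q^m)_k x^k = ∏_{0≤j<k}(x + y q^{s+mj})`.
The `k`-th summand of each series has order at least `k + 1`, so the
coefficient of `q^N` of each infinite sum is captured faithfully by the finite
sum over `k ≤ N` below. -/
theorem qseries_difference_nonneg (x y : ℝ) (hx : 1 ≤ x) (hy : 0 ≤ y)
    (a b m s : ℕ) (ha : 1 ≤ a) (hb : 1 ≤ b) (hm : 1 ≤ m) (hs : 1 ≤ s) (N : ℕ) :
    0 ≤ coeff (R := ℝ) N
      ((∑ k ∈ Finset.range (N + 1),
          (∏ j ∈ Finset.range k, (C (R := ℝ) x + C (R := ℝ) y * X ^ (s + m * j))) *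
            X ^ (a * (k + 1)) *
            (∏ j ∈ Finset.range (k + 1), (1 - (X : PowerSeries ℝ) ^ (s + m * j)))⁻¹) -
       (∑ k ∈ Finset.range (N + 1),
          (∏ j ∈ Finset.range k, (C (R := ℝ) x + C (R := ℝ) y * X ^ (s + m * j))) *
            X ^ (a * b * (k + 1)) *
            (∏ j ∈ Finset.range (k + 1), (1 - (X : PowerSeries ℝ) ^ (s + m * j)))⁻¹)) := by
  obtain ⟨b', rfl⟩ : ∃ b', b = b' + 1 := ⟨b - 1, by omega⟩
  rw [map_sub, sub_nonneg]
  have hTsum1 : (∑ k ∈ Finset.range (N + 1),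
      (∏ j ∈ Finset.range k, (C (R := ℝ) x + C (R := ℝ) y * X ^ (s + m * j))) *
        X ^ (a * (k + 1)) *
        (∏ j ∈ Finset.range (k + 1), (1 - (X : PowerSeries ℝ) ^ (s + m * j)))⁻¹)
      = ∑ k ∈ Finset.range (N + 1), T x y a m s k := rfl
  have hTsum2 : (∑ k ∈ Finset.range (N + 1),
      (∏ j ∈ Finset.range k, (C (R := ℝ) x + C (R := ℝ) y * X ^ (s + m * j))) *
        X ^ (a * (b' + 1) * (k + 1)) *
        (∏ j ∈ Finset.range (k + 1), (1 - (X : PowerSeries ℝ) ^ (s + m * j)))⁻¹)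
      = ∑ k ∈ Finset.range (N + 1), T x y (a * (b' + 1)) m s k := rfl
  rw [hTsum1, hTsum2, map_sum, map_sum]
  set φ : ℕ → ℕ := fun k => k + b' * (k + 1) with hφ
  have hmono : StrictMono φ := by
    intro u v huv
    simp only [hφ]
    have h1 : b' * (u + 1) ≤ b' * (v + 1) := Nat.mul_le_mul_left _ (by omega)
    omega
  calc ∑ k ∈ Finset.range (N + 1), coeff (R := ℝ) N (T x y (a * (b' + 1)) m s k)
      ≤ ∑ k ∈ Finset.range (N + 1), coeff (R := ℝ) N (T x y a m s (φ k)) :=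
        Finset.sum_le_sum fun k _ => dominate x y hx hy m s hs a b' k N
    _ = ∑ j ∈ (Finset.range (N + 1)).image φ, coeff (R := ℝ) N (T x y a m s j) :=
        by rw [Finset.sum_image fun u _ v _ h => hmono.injective h]
    _ ≤ ∑ j ∈ Finset.range ((b' + 1) * (N + 1)), coeff (R := ℝ) N (T x y a m s j) := by
        refine Finset.sum_le_sum_of_subset_of_nonneg ?_ fun j _ _ => nonneg_T x y hx hy a m s hs j N
        intro j hj
        rw [Finset.mem_image] at hj
        obtain ⟨k, hk, rfl⟩ := hj
        rw [Finset.mem_range] at hk ⊢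
        simp only [hφ]
        have h1 : b' * (k + 1) ≤ b' * (N + 1) := Nat.mul_le_mul_left _ (by omega)
        have h2 : (b' + 1) * (N + 1) = (N + 1) + b' * (N + 1) := by ring
        omega
    _ = ∑ j ∈ Finset.range (N + 1), coeff (R := ℝ) N (T x y a m s j) := by
        refine (Finset.sum_subset ?_ ?_).symm
        · intro j hj
          rw [Finset.mem_range] at hj ⊢
          nlinarith
        · intro j _ hj
          rw [Finset.mem_range, not_lt] at hj
          refine coeff_T_zero x y a m s j N ?_
          calc N < j + 1 := by omega
            _ ≤ a * (j + 1) := Nat.le_mul_of_pos_left _ (by omega)
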